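/- Every ξ = (ξ₁,ξ₂) ∈ Θ² satisfies min{ω(ξ₁), ω(ξ₂)} ≥ 4, where ω(ξᵢ) denotes the ordinary exponent of the single real number ξᵢ (its irrationality exponent measured by ω(ξᵢ) = sup{t > 0 : liminf_{q→∞} min_{0<|a|≤q, b∈ℤ} q^t|aξᵢ + b| < ∞}). -/

import Mathlib

open Filter Set Topology
open scoped ENNReal

noncomputable section

namespace BestApprox

/-- For `ξ ∈ ℝ^m`, the vector `ξ* = (ξ, 1) ∈ ℝ^{m+1}`. -/
def star {m : ℕ} (ξ : Fin m → ℝ) : Fin (m + 1) → ℝ := Fin.snoc ξ 1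

/-- For `q ∈ ℤ^{m+1}`, the vector `q̂ ∈ ℤ^m` of its first `m` coordinates. -/
def hat {m : ℕ} (q : Fin (m + 1) → ℤ) : Fin m → ℤ := fun i => q i.castSucc

/-- View an integer vector as a real vector. -/
def realVec {k : ℕ} (q : Fin k → ℤ) : Fin k → ℝ := fun i => (q i : ℝ)

/-- `|q ⬝ ξ*|`, the absolute value of the linear form. -/
def linForm {m : ℕ} (ξ : Fin m → ℝ) (q : Fin (m + 1) → ℤ) : ℝ :=
  |∑ i, (q i : ℝ) * star ξ i|

/-- `ξ` is totally irrational: `q ⬝ ξ* ≠ 0` for every nonzero integer vector `q`. -/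
def TotallyIrrational {m : ℕ} (ξ : Fin m → ℝ) : Prop :=
  ∀ q : Fin (m + 1) → ℤ, q ≠ 0 → (∑ i, (q i : ℝ) * star ξ i) ≠ 0

/-- `q` is a best approximation for `ξ` (max norm on the first `m` coordinates). -/
def IsBestApprox {m : ℕ} (ξ : Fin m → ℝ) (q : Fin (m + 1) → ℤ) : Prop :=
  hat q ≠ 0 ∧
    ∀ b : Fin (m + 1) → ℤ, hat b ≠ 0 → ‖hat b‖ ≤ ‖hat q‖ → linForm ξ q ≤ linForm ξ b

/-- `Q` is the sequence of best approximations of `ξ`, ordered by increasing norm,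
each best approximation occurring (up to sign) exactly once. -/
def IsBestApproxSeq {m : ℕ} (ξ : Fin m → ℝ) (Q : ℕ → Fin (m + 1) → ℤ) : Prop :=
  (∀ j, IsBestApprox ξ (Q j)) ∧
    (∀ j, ‖hat (Q j)‖ < ‖hat (Q (j + 1))‖) ∧
    (∀ j, linForm ξ (Q (j + 1)) < linForm ξ (Q j)) ∧
    (∀ b, IsBestApprox ξ b → ∃ j, b = Q j ∨ b = -Q j)

/-- Some tail of the best approximation sequence of `ξ` lies in `S`. -/
def HasTailIn {m : ℕ} (ξ : Fin m → ℝ) (S : Set (Fin (m + 1) → ℤ)) : Prop :=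
  ∃ Q : ℕ → Fin (m + 1) → ℤ, IsBestApproxSeq ξ Q ∧ ∃ j₀ : ℕ, ∀ j ≥ j₀, Q j ∈ S

/-- `R(ξ)`: the minimal `R` such that some tail of the best approximation sequence
lies in an `R`-dimensional sublattice of `ℤ^{m+1}`. -/
def Rexp {m : ℕ} (ξ : Fin m → ℝ) : ℕ :=
  sInf {R : ℕ | ∃ L : Submodule ℤ (Fin (m + 1) → ℤ),
    Module.finrank ℤ L = R ∧ HasTailIn ξ (L : Set (Fin (m + 1) → ℤ))}

/-- `Γₙ`: totally irrational `ξ ∈ ℝⁿ` with `R(ξ) = 3`. -/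
def Gamma (n : ℕ) : Set (Fin n → ℝ) := {ξ | TotallyIrrational ξ ∧ Rexp ξ = 3}

/-- `Γ_{n,k}`: totally irrational `ξ ∈ ℝⁿ` with `R(ξ) ≤ k`. -/
def GammaNK (n k : ℕ) : Set (Fin n → ℝ) := {ξ | TotallyIrrational ξ ∧ Rexp ξ ≤ k}

/-- `min{|b ⬝ ξ*| : 0 < ‖b̂‖ ≤ Q}`. -/
def minForm {m : ℕ} (ξ : Fin m → ℝ) (Q : ℝ) : ℝ :=
  sInf {r : ℝ | ∃ b : Fin (m + 1) → ℤ, hat b ≠ 0 ∧ ‖hat b‖ ≤ Q ∧ r = linForm ξ b}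

/-- The uniform exponent `ŵ(ξ)` (as an extended real number). -/
def uexp {m : ℕ} (ξ : Fin m → ℝ) : EReal :=
  sSup {t : EReal | ∃ t' : ℝ, t = (t' : EReal) ∧ 0 < t' ∧
    ∃ C : ℝ, ∀ᶠ Q : ℝ in atTop, Q ^ t' * minForm ξ Q ≤ C}

/-- The ordinary exponent `ω(ξ)` (as an extended real number). -/
def oexp {m : ℕ} (ξ : Fin m → ℝ) : EReal :=
  sSup {t : EReal | ∃ t' : ℝ, t = (t' : EReal) ∧ 0 < t' ∧
    ∃ C : ℝ, ∃ᶠ Q : ℝ in atTop, Q ^ t' * minForm ξ Q ≤ C}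

/-- `H_i ⊆ ℤ^{n+1}`: the two-dimensional sublattice spanned by `e_i` and `e_{n+1}`,
i.e. integer vectors all of whose coordinates vanish except possibly the `i`-th
and the last one. -/
def Hlat (n : ℕ) (i : Fin (n + 1)) : Set (Fin (n + 1) → ℤ) :=
  {q | ∀ j : Fin (n + 1), j ≠ i → j ≠ Fin.last n → q j = 0}

/-- `Θⁿ`: totally irrational `ξ ∈ ℝⁿ` whose tail of best approximations lies in
`H₁ ∪ H₂`, alternately, with any three consecutive ones linearly independent. -/
def Theta (n : ℕ) : Set (Fin n → ℝ) :=
  {ξ | TotallyIrrational ξ ∧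
    ∃ Q : ℕ → Fin (n + 1) → ℤ, IsBestApproxSeq ξ Q ∧
      ∃ j₀ : ℕ,
        (∀ j ≥ j₀, Q j ∈ Hlat n 0 ∪ Hlat n 1) ∧
        (∀ j ≥ j₀, ¬(Q j ∈ Hlat n 0 ∧ Q (j + 1) ∈ Hlat n 0) ∧
          ¬(Q j ∈ Hlat n 1 ∧ Q (j + 1) ∈ Hlat n 1)) ∧
        (∀ j ≥ j₀, LinearIndependent ℝ
          ![realVec (Q j), realVec (Q (j + 1)), realVec (Q (j + 2))])}

/-- `Θₙ(w)` for real `w`: elements of `Θⁿ` with `ŵ(ξ) = w` and `ω(ξ) = w²`. -/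
def ThetaW (n : ℕ) (w : ℝ) : Set (Fin n → ℝ) :=
  {ξ | ξ ∈ Theta n ∧ uexp ξ = (w : EReal) ∧ oexp ξ = ((w ^ 2 : ℝ) : EReal)}

/-- Covering number: minimal number of `ε`-balls needed to cover `S`. -/
def coverNum {X : Type*} [PseudoEMetricSpace X] (S : Set X) (ε : ℝ≥0∞) : ℝ≥0∞ :=
  sInf {N : ℝ≥0∞ | ∃ F : Finset X, (S ⊆ ⋃ x ∈ F, EMetric.ball x ε) ∧ N = F.card}

/-- Upper box (Minkowski) dimension: the infimum of exponents `r ≥ 0` such that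
the covering number is `O(ε^{-r})` as `ε → 0⁺`. -/
def upperBoxDim {X : Type*} [PseudoEMetricSpace X] (S : Set X) : ℝ≥0∞ :=
  sInf {s : ℝ≥0∞ | ∃ r : ℝ, 0 ≤ r ∧ s = ENNReal.ofReal r ∧
    ∃ C : ℝ≥0∞, C ≠ ⊤ ∧ ∀ᶠ ε in 𝓝[>] (0 : ℝ≥0∞), coverNum S ε ≤ C * ε⁻¹ ^ r}

/-- Packing dimension, via the modified upper box dimension. -/
def packingDim {X : Type*} [PseudoEMetricSpace X] (S : Set X) : ℝ≥0∞ :=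
  ⨅ (U : ℕ → Set X) (_ : S ⊆ ⋃ i, U i), ⨆ i, upperBoxDim (U i)

/-! ### Auxiliary lemmas -/

lemma star3 (ξ : Fin 2 → ℝ) : star ξ 0 = ξ 0 ∧ star ξ 1 = ξ 1 ∧ star ξ 2 = 1 := by
  refine ⟨?_, ?_, ?_⟩ <;> simp [star, Fin.snoc] <;> rfl

lemma linForm3 (ξ : Fin 2 → ℝ) (q : Fin 3 → ℤ) :
    linForm ξ q = |(q 0 : ℝ) * ξ 0 + (q 1 : ℝ) * ξ 1 + (q 2 : ℝ)| := by
  obtain ⟨h0, h1, h2⟩ := star3 ξ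
  unfold linForm
  rw [Fin.sum_univ_three, h0, h1, h2, mul_one]

lemma star2 (x : ℝ) : star ![x] 0 = x ∧ star ![x] 1 = 1 := by
  constructor <;> simp [star, Fin.snoc] <;> rfl

lemma linForm2 (x : ℝ) (b : Fin 2 → ℤ) :
    linForm ![x] b = |(b 0 : ℝ) * x + (b 1 : ℝ)| := by
  obtain ⟨h0, h1⟩ := star2 x
  unfold linForm
  rw [Fin.sum_univ_two, h0, h1, mul_one]

lemma norm_fin2 (v : Fin 2 → ℤ) : ‖v‖ = max |(v 0 : ℝ)| |(v 1 : ℝ)| := by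
  have h1 : ‖v‖ ≤ max |(v 0 : ℝ)| |(v 1 : ℝ)| := by
    apply pi_norm_le_iff_of_nonneg (le_max_iff.2 (Or.inl (abs_nonneg _))) |>.2
    intro i
    fin_cases i
    · exact le_max_left _ _
    · exact le_max_right _ _
  have h2 : max |(v 0 : ℝ)| |(v 1 : ℝ)| ≤ ‖v‖ :=
    max_le (norm_le_pi_norm v 0) (norm_le_pi_norm v 1)
  linarith

lemma norm_fin1 (v : Fin 1 → ℤ) : ‖v‖ = |(v 0 : ℝ)| := by
  have h1 : ‖v‖ ≤ |(v 0 : ℝ)| := by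
    apply pi_norm_le_iff_of_nonneg (abs_nonneg _) |>.2
    intro i; fin_cases i; exact le_rfl
  have h2 := norm_le_pi_norm v 0
  have : ‖v 0‖ = |(v 0 : ℝ)| := rfl
  linarith

lemma hat3 (q : Fin 3 → ℤ) : hat q 0 = q 0 ∧ hat q 1 = q 1 := ⟨rfl, rfl⟩

lemma hat2 (b : Fin 2 → ℤ) : hat b 0 = b 0 := rfl

lemma hat_neg' {m : ℕ} (q : Fin (m+1) → ℤ) : hat (-q) = -(hat q) := rfl

lemma linForm_neg' {m : ℕ} (ξ : Fin m → ℝ) (q : Fin (m+1) → ℤ) :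
    linForm ξ (-q) = linForm ξ q := by
  unfold linForm
  rw [← abs_neg, ← Finset.sum_neg_distrib]
  congr 1
  apply Finset.sum_congr rfl
  intro i _
  push_cast [Pi.neg_apply]
  ring

lemma linForm_nonneg' {m : ℕ} (ξ : Fin m → ℝ) (q : Fin (m+1) → ℤ) : 0 ≤ linForm ξ q :=
  abs_nonneg _

lemma exists_nat_norm (v : Fin 2 → ℤ) : ∃ n : ℕ, ‖v‖ = n := by
  refine ⟨max (v 0).natAbs (v 1).natAbs, ?_⟩
  rw [norm_fin2, Nat.cast_max, Nat.cast_natAbs, Nat.cast_natAbs]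
  push_cast
  rfl

lemma one_le_norm_of_ne (v : Fin 2 → ℤ) (h : v ≠ 0) : (1:ℝ) ≤ ‖v‖ := by
  have : ∃ i, v i ≠ 0 := by
    by_contra hc
    push_neg at hc
    exact h (funext hc)
  obtain ⟨i, hi⟩ := this
  have h1 : (1:ℝ) ≤ |(v i : ℝ)| := by
    have := Int.one_le_abs hi
    calc (1:ℝ) = ((1:ℤ):ℝ) := by norm_num
      _ ≤ ((|v i| : ℤ) : ℝ) := by exact_mod_cast this
      _ = |(v i : ℝ)| := by push_cast; ring
  calc (1:ℝ) ≤ |(v i : ℝ)| := h1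
    _ = ‖v i‖ := rfl
    _ ≤ ‖v‖ := norm_le_pi_norm v i

/-- Dirichlet's theorem via pigeonhole. -/
lemma dirichlet (ξ : Fin 2 → ℝ) (N : ℕ) (hN : 1 ≤ N) :
    ∃ v : Fin 3 → ℤ, hat v ≠ 0 ∧ ‖hat v‖ ≤ (N : ℝ) ∧ linForm ξ v ≤ 1 / (N : ℝ) ^ 2 := by
  set K : ℕ := N * N + 2 * N with hK
  have hKpos : 0 < K := by positivity
  have hKR : (0:ℝ) < (K:ℝ) := by exact_mod_cast hKpos
  set f : ℕ × ℕ → ℝ := fun p => (p.1 : ℝ) * ξ 0 + (p.2 : ℝ) * ξ 1 with hf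
  set g : ℕ × ℕ → ℕ := fun p => (⌊(K : ℝ) * Int.fract (f p)⌋).toNat with hg
  have hmaps : ∀ p ∈ Finset.range (N+1) ×ˢ Finset.range (N+1), g p ∈ Finset.range K := by
    intro p _
    simp only [Finset.mem_range, hg]
    have h1 : (K : ℝ) * Int.fract (f p) < K := by
      nlinarith [Int.fract_lt_one (f p), Int.fract_nonneg (f p)]
    have h3 : ⌊(K : ℝ) * Int.fract (f p)⌋ < (K : ℤ) := by
      have h2 : (⌊(K : ℝ) * Int.fract (f p)⌋ : ℝ) < (K : ℝ) := lt_of_le_of_lt (Int.floor_le _) h1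
      exact_mod_cast h2
    omega
  have hcard : (Finset.range K).card < ((Finset.range (N+1)) ×ˢ (Finset.range (N+1))).card := by
    rw [Finset.card_product, Finset.card_range, Finset.card_range]
    have : (N+1)*(N+1) = N*N+2*N+1 := by ring
    omega
  obtain ⟨p, hp, p', hp', hne, heq⟩ :=
    Finset.exists_ne_map_eq_of_card_lt_of_maps_to hcard hmaps
  have hfr : |Int.fract (f p) - Int.fract (f p')| < 1 / (K : ℝ) := by
    have hfloor : ⌊(K : ℝ) * Int.fract (f p)⌋ = ⌊(K : ℝ) * Int.fract (f p')⌋ := by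
      have t2 : (0:ℤ) ≤ ⌊(K : ℝ) * Int.fract (f p)⌋ :=
        Int.floor_nonneg.2 (mul_nonneg hKR.le (Int.fract_nonneg _))
      have t3 : (0:ℤ) ≤ ⌊(K : ℝ) * Int.fract (f p')⌋ :=
        Int.floor_nonneg.2 (mul_nonneg hKR.le (Int.fract_nonneg _))
      have t1 : ⌊(K : ℝ) * Int.fract (f p)⌋.toNat = ⌊(K : ℝ) * Int.fract (f p')⌋.toNat := heq
      omega
    have hfl : ((⌊(K : ℝ) * Int.fract (f p)⌋ : ℤ) : ℝ) = ((⌊(K : ℝ) * Int.fract (f p')⌋ : ℤ) : ℝ) := by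
      exact_mod_cast hfloor
    have h1 : |(K:ℝ) * Int.fract (f p) - (K:ℝ) * Int.fract (f p')| < 1 := by
      have la := Int.floor_le ((K:ℝ) * Int.fract (f p))
      have lb := Int.lt_floor_add_one ((K:ℝ) * Int.fract (f p))
      have lc := Int.floor_le ((K:ℝ) * Int.fract (f p'))
      have ld := Int.lt_floor_add_one ((K:ℝ) * Int.fract (f p'))
      rw [abs_lt]
      constructor <;> linarith
    have h2 : |(K:ℝ) * Int.fract (f p) - (K:ℝ) * Int.fract (f p')|
        = (K:ℝ) * |Int.fract (f p) - Int.fract (f p')| := by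
      rw [← mul_sub, abs_mul, abs_of_nonneg hKR.le]
    rw [h2] at h1
    rw [lt_div_iff₀ hKR, mul_comm]
    exact h1
  set v : Fin 3 → ℤ := ![(p.1 : ℤ) - p'.1, (p.2 : ℤ) - p'.2, ⌊f p'⌋ - ⌊f p⌋] with hv
  have hv0 : v 0 = (p.1 : ℤ) - p'.1 := rfl
  have hv1 : v 1 = (p.2 : ℤ) - p'.2 := rfl
  have hv2 : v 2 = ⌊f p'⌋ - ⌊f p⌋ := rfl
  refine ⟨v, ?_, ?_, ?_⟩
  · intro h0
    apply hne
    have e0 : hat v 0 = 0 := by rw [h0]; rfl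
    have e1 : hat v 1 = 0 := by rw [h0]; rfl
    rw [(hat3 v).1, hv0] at e0
    rw [(hat3 v).2, hv1] at e1
    have : p.1 = p'.1 := by omega
    have : p.2 = p'.2 := by omega
    exact Prod.ext ‹p.1 = p'.1› ‹p.2 = p'.2›
  · rw [norm_fin2, (hat3 v).1, (hat3 v).2, hv0, hv1]
    simp only [Finset.mem_product, Finset.mem_range] at hp hp'
    have b0 : |(p.1:ℤ) - p'.1| ≤ (N:ℤ) := by
      rw [abs_le]; have := hp.1; have := hp'.1; omega
    have b1 : |(p.2:ℤ) - p'.2| ≤ (N:ℤ) := by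
      rw [abs_le]; have := hp.2; have := hp'.2; omega
    rw [max_le_iff]
    constructor <;> [exact_mod_cast b0; exact_mod_cast b1]
  · rw [linForm3, hv0, hv1, hv2]
    have key : ((p.1:ℤ) - p'.1 : ℝ) * ξ 0 + ((p.2:ℤ) - p'.2 : ℝ) * ξ 1 + ((⌊f p'⌋ - ⌊f p⌋ : ℤ) : ℝ)
        = Int.fract (f p) - Int.fract (f p') := by
      rw [Int.fract, Int.fract]
      push_cast
      simp only [hf]
      push_cast
      ring
    push_cast
    push_cast at key
    rw [key]
    have hKN : (N:ℝ)^2 ≤ (K:ℝ) := by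
      push_cast [hK]
      nlinarith [hN]
    have : 1/(K:ℝ) ≤ 1/(N:ℝ)^2 := by
      apply one_div_le_one_div_of_le
      · positivity
      · exact hKN
    linarith [hfr]
/-- Minimality of the linear form below the next best-approximation scale. -/
lemma min_below (ξ : Fin 2 → ℝ) (Q : ℕ → Fin 3 → ℤ) (hseq : IsBestApproxSeq ξ Q) (j : ℕ)
    (b : Fin 3 → ℤ) (hb : hat b ≠ 0) (hlt : ‖hat b‖ < ‖hat (Q (j+1))‖) :
    linForm ξ (Q j) ≤ linForm ξ b := by
  classical
  set R : ℝ := ‖hat b‖ with hR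
  have hR0 : 0 ≤ R := norm_nonneg _
  set B : ℝ := linForm ξ b + R * (|ξ 0| + |ξ 1|) with hB
  set M : ℤ := max ⌈R⌉ ⌈B⌉ with hM
  have hRM : R ≤ (M:ℝ) := le_trans (Int.le_ceil R) (by exact_mod_cast le_max_left ⌈R⌉ ⌈B⌉)
  have hBM : B ≤ (M:ℝ) := le_trans (Int.le_ceil B) (by exact_mod_cast le_max_right ⌈R⌉ ⌈B⌉)
  set T : Finset (Fin 3 → ℤ) := Finset.Icc (fun _ => -M) (fun _ => M) with hT
  set S : Finset (Fin 3 → ℤ) :=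
    T.filter (fun v => hat v ≠ 0 ∧ ‖hat v‖ ≤ R ∧ linForm ξ v ≤ linForm ξ b) with hS
  have coord01 : ∀ v : Fin 3 → ℤ, ‖hat v‖ ≤ R → |(v 0 : ℝ)| ≤ R ∧ |(v 1 : ℝ)| ≤ R := by
    intro v h2
    rw [norm_fin2, (hat3 v).1, (hat3 v).2, max_le_iff] at h2
    exact h2
  have mem_S : ∀ v : Fin 3 → ℤ,
      hat v ≠ 0 → ‖hat v‖ ≤ R → linForm ξ v ≤ linForm ξ b → v ∈ S := by
    intro v h1 h2 h3
    rw [hS, Finset.mem_filter]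
    refine ⟨?_, h1, h2, h3⟩
    rw [hT, Finset.mem_Icc]
    obtain ⟨h0', h1'⟩ := coord01 v h2
    have habs : ∀ i : Fin 3, |(v i : ℝ)| ≤ (M:ℝ) := by
      intro i
      fin_cases i
      · exact le_trans h0' hRM
      · exact le_trans h1' hRM
      · have hlf : |(v 0 : ℝ) * ξ 0 + (v 1 : ℝ) * ξ 1 + (v 2 : ℝ)| ≤ linForm ξ b := by
          rw [← linForm3 ξ v]; exact h3
        set Xx : ℝ := (v 0 : ℝ) * ξ 0 + (v 1 : ℝ) * ξ 1 + (v 2 : ℝ) with hXx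
        set Aa : ℝ := (v 0 : ℝ) * ξ 0 with hAa
        set Bb : ℝ := (v 1 : ℝ) * ξ 1 with hBb
        have t : |(v 2 : ℝ)| ≤ |Xx| + |Aa| + |Bb| := by
          rw [abs_le]
          constructor
          · have := neg_abs_le Xx
            have := le_abs_self Aa
            have := le_abs_self Bb
            have hv2 : (v 2 : ℝ) = Xx - Aa - Bb := by rw [hXx, hAa, hBb]; ring
            linarith
          · have := le_abs_self Xx
            have := neg_abs_le Aa
            have := neg_abs_le Bb
            have hv2 : (v 2 : ℝ) = Xx - Aa - Bb := by rw [hXx, hAa, hBb]; ring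
            linarith
        have tabs : |Aa| = |(v 0:ℝ)| * |ξ 0| := by rw [hAa, abs_mul]
        have tabs' : |Bb| = |(v 1:ℝ)| * |ξ 1| := by rw [hBb, abs_mul]
        have habs0 : 0 ≤ |ξ 0| := abs_nonneg _
        have habs1 : 0 ≤ |ξ 1| := abs_nonneg _
        calc |(v 2 : ℝ)| ≤ linForm ξ b + R * |ξ 0| + R * |ξ 1| := by
              rw [tabs, tabs'] at t
              nlinarith [hlf, t]
          _ = B := by rw [hB]; ring
          _ ≤ M := hBM
    constructor <;> intro i <;> have hi := habs i <;> rw [abs_le] at hi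
    · exact_mod_cast hi.1
    · exact_mod_cast hi.2
  have hbS : b ∈ S := mem_S b hb le_rfl le_rfl
  obtain ⟨q, hqS, hqmin⟩ := Finset.exists_min_image S (linForm ξ) ⟨b, hbS⟩
  rw [hS, Finset.mem_filter] at hqS
  obtain ⟨-, hq1, hq2, hq3⟩ := hqS
  have hqb : IsBestApprox ξ q := by
    refine ⟨hq1, ?_⟩
    intro b' hb1' hb2'
    by_cases hcase : linForm ξ b' ≤ linForm ξ b
    · exact hqmin b' (mem_S b' hb1' (le_trans hb2' hq2) hcase)
    · push_neg at hcase
      exact le_trans hq3 hcase.le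
  obtain ⟨k, hk⟩ := hseq.2.2.2 q hqb
  have hXmono : StrictMono (fun k => ‖hat (Q k)‖) := strictMono_nat_of_lt_succ hseq.2.1
  have hLanti : StrictAnti (fun k => linForm ξ (Q k)) := strictAnti_nat_of_succ_lt hseq.2.2.1
  have hnormq : ‖hat (Q k)‖ = ‖hat q‖ := by
    rcases hk with rfl | rfl
    · rfl
    · rw [hat_neg', norm_neg]
  have hlinq : linForm ξ (Q k) = linForm ξ q := by
    rcases hk with rfl | rfl
    · rfl
    · rw [linForm_neg']
  have hkj : k ≤ j := by
    by_contra hcon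
    push_neg at hcon
    have h1 : ‖hat (Q (j+1))‖ ≤ ‖hat (Q k)‖ := hXmono.monotone hcon
    rw [hnormq] at h1
    have : ‖hat q‖ ≤ R := hq2
    linarith [hlt]
  calc linForm ξ (Q j) ≤ linForm ξ (Q k) := hLanti.antitone hkj
    _ = linForm ξ q := hlinq
    _ ≤ linForm ξ b := hq3
lemma hlat0_coord (q : Fin 3 → ℤ) (h : q ∈ Hlat 2 0) : q 1 = 0 :=
  h 1 (by decide) (by decide)

lemma hlat1_coord (q : Fin 3 → ℤ) (h : q ∈ Hlat 2 1) : q 0 = 0 :=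
  h 0 (by decide) (by decide)

/-- The two-dimensional determinant bound coming from linear independence. -/
lemma detB (ξ : Fin 2 → ℝ) (Q : ℕ → Fin 3 → ℤ) (hseq : IsBestApproxSeq ξ Q) (j₀ : ℕ)
    (h1 : ∀ j ≥ j₀, Q j ∈ Hlat 2 0 ∪ Hlat 2 1)
    (h2 : ∀ j ≥ j₀, ¬(Q j ∈ Hlat 2 0 ∧ Q (j + 1) ∈ Hlat 2 0) ∧
      ¬(Q j ∈ Hlat 2 1 ∧ Q (j + 1) ∈ Hlat 2 1))
    (h3 : ∀ j ≥ j₀, LinearIndependent ℝ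
      ![realVec (Q j), realVec (Q (j + 1)), realVec (Q (j + 2))])
    (j : ℕ) (hj : j₀ ≤ j) :
    1 ≤ 2 * ‖hat (Q (j+2))‖ * linForm ξ (Q j) := by
  have hXmono : StrictMono (fun k => ‖hat (Q k)‖) := strictMono_nat_of_lt_succ hseq.2.1
  have hLanti : StrictAnti (fun k => linForm ξ (Q k)) := strictAnti_nat_of_succ_lt hseq.2.2.1
  have hj1 : j₀ ≤ j + 1 := le_trans hj (Nat.le_succ j)
  have hj2 : j₀ ≤ j + 2 := le_trans hj1 (Nat.le_succ (j+1))
  -- same-lattice pair: either both in H0 (on coordinate position 1 zero) or both in H1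
  have hpair : (Q j 1 = 0 ∧ Q (j+2) 1 = 0) ∨ (Q j 0 = 0 ∧ Q (j+2) 0 = 0) := by
    rcases h1 j hj with hu | hu
    · left
      have hnext : Q (j+1) ∈ Hlat 2 1 := by
        rcases h1 (j+1) hj1 with hv | hv
        · exact absurd ⟨hu, hv⟩ (h2 j hj).1
        · exact hv
      have hnn : Q (j+2) ∈ Hlat 2 0 := by
        rcases h1 (j+2) hj2 with hw | hw
        · exact hw
        · exact absurd ⟨hnext, hw⟩ (h2 (j+1) hj1).2
      exact ⟨hlat0_coord _ hu, hlat0_coord _ hnn⟩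
    · right
      have hnext : Q (j+1) ∈ Hlat 2 0 := by
        rcases h1 (j+1) hj1 with hv | hv
        · exact hv
        · exact absurd ⟨hu, hv⟩ (h2 j hj).2
      have hnn : Q (j+2) ∈ Hlat 2 1 := by
        rcases h1 (j+2) hj2 with hw | hw
        · exact absurd ⟨hnext, hw⟩ (h2 (j+1) hj1).1
        · exact hw
      exact ⟨hlat1_coord _ hu, hlat1_coord _ hnn⟩
  -- generic treatment
  have key : ∀ (x : ℝ) (a c a' c' : ℤ),
      linForm ξ (Q j) = |(a:ℝ) * x + (c:ℝ)| →
      linForm ξ (Q (j+2)) = |(a':ℝ) * x + (c':ℝ)| →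
      |(a:ℝ)| ≤ ‖hat (Q j)‖ → |(a':ℝ)| ≤ ‖hat (Q (j+2))‖ →
      a * c' - a' * c ≠ 0 →
      1 ≤ 2 * ‖hat (Q (j+2))‖ * linForm ξ (Q j) := by
    intro x a c a' c' hLj hLj2 haX haX'
    intro hd
    have hd1 : (1:ℝ) ≤ |(a:ℝ) * (c':ℝ) - (a':ℝ) * (c:ℝ)| := by
      have := Int.one_le_abs hd
      have hcast : ((|a * c' - a' * c| : ℤ) : ℝ) = |(a:ℝ) * (c':ℝ) - (a':ℝ) * (c:ℝ)| := by
        push_cast; ring_nf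
      calc (1:ℝ) = ((1:ℤ):ℝ) := by norm_num
        _ ≤ ((|a * c' - a' * c| : ℤ) : ℝ) := by exact_mod_cast this
        _ = _ := hcast
    have hid : (a:ℝ) * (c':ℝ) - (a':ℝ) * (c:ℝ)
        = (a:ℝ) * ((a':ℝ) * x + (c':ℝ)) - (a':ℝ) * ((a:ℝ) * x + (c:ℝ)) := by ring
    have htri : |(a:ℝ) * (c':ℝ) - (a':ℝ) * (c:ℝ)|
        ≤ |(a:ℝ)| * |(a':ℝ) * x + (c':ℝ)| + |(a':ℝ)| * |(a:ℝ) * x + (c:ℝ)| := by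
      rw [hid]
      calc |(a:ℝ) * ((a':ℝ) * x + (c':ℝ)) - (a':ℝ) * ((a:ℝ) * x + (c:ℝ))|
          ≤ |(a:ℝ) * ((a':ℝ) * x + (c':ℝ))| + |(a':ℝ) * ((a:ℝ) * x + (c:ℝ))| := abs_sub _ _
        _ = |(a:ℝ)| * |(a':ℝ) * x + (c':ℝ)| + |(a':ℝ)| * |(a:ℝ) * x + (c:ℝ)| := by
            rw [abs_mul, abs_mul]
    have hXle : ‖hat (Q j)‖ ≤ ‖hat (Q (j+2))‖ := (hXmono.monotone (by omega : j ≤ j + 2))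
    have hLle : linForm ξ (Q (j+2)) ≤ linForm ξ (Q j) := (hLanti.antitone (by omega : j ≤ j + 2))
    have hXnn : (0:ℝ) ≤ ‖hat (Q (j+2))‖ := norm_nonneg _
    have hLnn : (0:ℝ) ≤ linForm ξ (Q j) := linForm_nonneg' _ _
    have habsnn : (0:ℝ) ≤ |(a:ℝ)| := abs_nonneg _
    have habsnn' : (0:ℝ) ≤ |(a':ℝ)| := abs_nonneg _
    have e1 : |(a:ℝ)| * |(a':ℝ) * x + (c':ℝ)| ≤ ‖hat (Q (j+2))‖ * linForm ξ (Q j) := by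
      rw [← hLj2]
      have h5 : linForm ξ (Q (j+2)) ≥ 0 := linForm_nonneg' _ _
      have := le_trans haX hXle
      nlinarith
    have e2 : |(a':ℝ)| * |(a:ℝ) * x + (c:ℝ)| ≤ ‖hat (Q (j+2))‖ * linForm ξ (Q j) := by
      rw [← hLj]
      nlinarith
    linarith
  -- the nonvanishing of the determinant, generic in the active coordinate
  have hind := Fintype.linearIndependent_iff.mp (h3 j hj)
  rcases hpair with ⟨zu, zw⟩ | ⟨zu, zw⟩
  · -- both in H0, active coordinate 0
    have hLj : linForm ξ (Q j) = |(Q j 0 : ℝ) * ξ 0 + (Q j 2 : ℝ)| := by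
      rw [linForm3, zu]; push_cast; ring_nf
    have hLj2 : linForm ξ (Q (j+2)) = |(Q (j+2) 0 : ℝ) * ξ 0 + (Q (j+2) 2 : ℝ)| := by
      rw [linForm3, zw]; push_cast; ring_nf
    have haX : |(Q j 0 : ℝ)| ≤ ‖hat (Q j)‖ := norm_le_pi_norm (hat (Q j)) 0
    have haX' : |(Q (j+2) 0 : ℝ)| ≤ ‖hat (Q (j+2))‖ := norm_le_pi_norm (hat (Q (j+2))) 0
    refine key (ξ 0) (Q j 0) (Q j 2) (Q (j+2) 0) (Q (j+2) 2) hLj hLj2 haX haX' ?_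
    intro hd0
    have hg := hind ![(Q (j+2) 0 : ℝ), 0, -(Q j 0 : ℝ)] ?_
    · have hg2 := hg 2
      have ha0 : (Q j 0 : ℝ) = 0 := by
        have : -(Q j 0 : ℝ) = 0 := by simpa using hg2
        linarith
      have ha0' : Q j 0 = 0 := by exact_mod_cast ha0
      apply (hseq.1 j).1
      funext i
      fin_cases i
      · show Q j 0 = 0; exact ha0'
      · show Q j 1 = 0; exact zu
    · rw [Fin.sum_univ_three]
      funext m
      have hdr : (Q j 0 : ℝ) * (Q (j+2) 2 : ℝ) - (Q (j+2) 0 : ℝ) * (Q j 2 : ℝ) = 0 := by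
        have : ((Q j 0 * Q (j+2) 2 - Q (j+2) 0 * Q j 2 : ℤ) : ℝ) = ((0:ℤ):ℝ) := by
          exact_mod_cast congrArg (fun z : ℤ => (z:ℝ)) hd0
        push_cast at this
        linarith
      fin_cases m <;>
        simp [realVec, zu, zw] <;>
        push_cast <;> nlinarith [hdr]
  · -- both in H1, active coordinate 1
    have hLj : linForm ξ (Q j) = |(Q j 1 : ℝ) * ξ 1 + (Q j 2 : ℝ)| := by
      rw [linForm3, zu]; push_cast; ring_nf
    have hLj2 : linForm ξ (Q (j+2)) = |(Q (j+2) 1 : ℝ) * ξ 1 + (Q (j+2) 2 : ℝ)| := by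
      rw [linForm3, zw]; push_cast; ring_nf
    have haX : |(Q j 1 : ℝ)| ≤ ‖hat (Q j)‖ := norm_le_pi_norm (hat (Q j)) 1
    have haX' : |(Q (j+2) 1 : ℝ)| ≤ ‖hat (Q (j+2))‖ := norm_le_pi_norm (hat (Q (j+2))) 1
    refine key (ξ 1) (Q j 1) (Q j 2) (Q (j+2) 1) (Q (j+2) 2) hLj hLj2 haX haX' ?_
    intro hd0
    have hg := hind ![(Q (j+2) 1 : ℝ), 0, -(Q j 1 : ℝ)] ?_
    · have hg2 := hg 2
      have ha0 : (Q j 1 : ℝ) = 0 := by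
        have : -(Q j 1 : ℝ) = 0 := by simpa using hg2
        linarith
      have ha0' : Q j 1 = 0 := by exact_mod_cast ha0
      apply (hseq.1 j).1
      funext i
      fin_cases i
      · show Q j 0 = 0; exact zu
      · show Q j 1 = 0; exact ha0'
    · rw [Fin.sum_univ_three]
      funext m
      have hdr : (Q j 1 : ℝ) * (Q (j+2) 2 : ℝ) - (Q (j+2) 1 : ℝ) * (Q j 2 : ℝ) = 0 := by
        have : ((Q j 1 * Q (j+2) 2 - Q (j+2) 1 * Q j 2 : ℤ) : ℝ) = ((0:ℤ):ℝ) := by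
          exact_mod_cast congrArg (fun z : ℤ => (z:ℝ)) hd0
        push_cast at this
        linarith
      fin_cases m <;>
        simp [realVec, zu, zw] <;>
        push_cast <;> nlinarith [hdr]
lemma LA (ξ : Fin 2 → ℝ) (Q : ℕ → Fin 3 → ℤ) (hseq : IsBestApproxSeq ξ Q)
    (j : ℕ) (N : ℕ) (hN : 1 ≤ N) (hlt : (N:ℝ) < ‖hat (Q (j+1))‖) :
    linForm ξ (Q j) ≤ 1 / (N:ℝ)^2 := by
  obtain ⟨v, hv1, hv2, hv3⟩ := dirichlet ξ N hN
  exact le_trans (min_below ξ Q hseq j v hv1 (lt_of_le_of_lt hv2 hlt)) hv3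

lemma KEY (ξ : Fin 2 → ℝ) (Q : ℕ → Fin 3 → ℤ) (hseq : IsBestApproxSeq ξ Q) (j₀ : ℕ)
    (h1 : ∀ j ≥ j₀, Q j ∈ Hlat 2 0 ∪ Hlat 2 1)
    (h2 : ∀ j ≥ j₀, ¬(Q j ∈ Hlat 2 0 ∧ Q (j + 1) ∈ Hlat 2 0) ∧
      ¬(Q j ∈ Hlat 2 1 ∧ Q (j + 1) ∈ Hlat 2 1))
    (h3 : ∀ j ≥ j₀, LinearIndependent ℝ
      ![realVec (Q j), realVec (Q (j + 1)), realVec (Q (j + 2))])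
    (j : ℕ) (hj : j₀ ≤ j) (h5 : (5:ℝ) ≤ ‖hat (Q (j+1))‖) :
    ‖hat (Q (j+1))‖^4 * linForm ξ (Q (j+1)) ≤ 16 := by
  obtain ⟨x1, hx1⟩ := exists_nat_norm (hat (Q (j+1)))
  obtain ⟨x2, hx2⟩ := exists_nat_norm (hat (Q (j+2)))
  have hx1ge : 5 ≤ x1 := by exact_mod_cast hx1 ▸ h5
  have hx1R : (5:ℝ) ≤ (x1:ℝ) := by exact_mod_cast hx1ge
  -- first application of Dirichlet + minimality, at scale j
  have hca : ((x1 - 1 : ℕ) : ℝ) = (x1:ℝ) - 1 := by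
    push_cast [Nat.cast_sub (by omega : 1 ≤ x1)]
    ring
  have hLj : linForm ξ (Q j) ≤ 1 / ((x1:ℝ) - 1)^2 := by
    have := LA ξ Q hseq j (x1 - 1) (by omega) (by rw [hca, hx1]; linarith)
    rwa [hca] at this
  -- determinant bound at j
  have hdet := detB ξ Q hseq j₀ h1 h2 h3 j hj
  have hx2R : ((x1:ℝ) - 1)^2 / 2 ≤ (x2:ℝ) := by
    rw [← hx2]
    have hpos : (0:ℝ) < ((x1:ℝ) - 1)^2 := by nlinarith
    have step : (1:ℝ) ≤ 2 * ‖hat (Q (j+2))‖ * (1 / ((x1:ℝ) - 1)^2) :=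
      le_trans hdet (mul_le_mul_of_nonneg_left hLj
        (by positivity : (0:ℝ) ≤ 2 * ‖hat (Q (j+2))‖))
    rw [mul_one_div] at step
    have := (one_le_div hpos).mp step
    linarith
  have hx2ge : 8 ≤ x2 := by
    have : (8:ℝ) ≤ (x2:ℝ) := by nlinarith
    exact_mod_cast this
  -- second application, at scale j+1
  have hcb : ((x2 - 1 : ℕ) : ℝ) = (x2:ℝ) - 1 := by
    push_cast [Nat.cast_sub (by omega : 1 ≤ x2)]
    ring
  have hLj1 : linForm ξ (Q (j+1)) ≤ 1 / ((x2:ℝ) - 1)^2 := by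
    have := LA ξ Q hseq (j+1) (x2 - 1) (by omega) (by rw [hcb, hx2]; linarith)
    rwa [hcb] at this
  -- chain the growth
  have hgrow : (x1:ℝ)^2 / 4 ≤ (x2:ℝ) - 1 := by nlinarith
  have hD : (x1:ℝ)^4 / 16 ≤ ((x2:ℝ) - 1)^2 := by nlinarith
  have hDpos : (0:ℝ) < ((x2:ℝ) - 1)^2 := by
    have : (0:ℝ) < (x1:ℝ)^4 / 16 := by positivity
    linarith
  rw [hx1]
  calc (x1:ℝ)^4 * linForm ξ (Q (j+1)) ≤ (x1:ℝ)^4 * (1 / ((x2:ℝ) - 1)^2) := by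
        apply mul_le_mul_of_nonneg_left hLj1 (by positivity)
    _ ≤ 16 := by
        rw [mul_one_div, div_le_iff₀ hDpos]
        nlinarith
lemma Xgrow (ξ : Fin 2 → ℝ) (Q : ℕ → Fin 3 → ℤ) (hseq : IsBestApproxSeq ξ Q) :
    ∀ k : ℕ, (k:ℝ) ≤ ‖hat (Q k)‖ := by
  intro k
  induction k with
  | zero => simpa using norm_nonneg (hat (Q 0))
  | succ k ih =>
    obtain ⟨n, hn⟩ := exists_nat_norm (hat (Q k))
    obtain ⟨m, hm⟩ := exists_nat_norm (hat (Q (k+1)))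
    have hlt : (n:ℝ) < (m:ℝ) := by rw [← hn, ← hm]; exact hseq.2.1 k
    have : n < m := by exact_mod_cast hlt
    have h1 : (n:ℝ) + 1 ≤ (m:ℝ) := by exact_mod_cast this
    rw [hm]
    rw [hn] at ih
    push_cast
    linarith

lemma minForm_le_abs (x : ℝ) (Qr : ℝ) (b : Fin 2 → ℤ) (hb : b 0 ≠ 0) (hn : |(b 0:ℝ)| ≤ Qr) :
    minForm ![x] Qr ≤ |(b 0:ℝ) * x + (b 1:ℝ)| := by
  apply csInf_le
  · refine ⟨0, ?_⟩
    rintro r ⟨v, -, -, rfl⟩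
    exact linForm_nonneg' _ _
  · refine ⟨b, ?_, ?_, (linForm2 x b).symm⟩
    · intro h
      apply hb
      have := congrFun h 0
      exact this
    · rw [norm_fin1]
      exact hn

lemma minForm_nonneg (x : ℝ) (Qr : ℝ) : 0 ≤ minForm ![x] Qr := by
  apply Real.sInf_nonneg
  rintro r ⟨v, -, -, rfl⟩
  exact linForm_nonneg' _ _

lemma oexp_ge_four_of (x : ℝ)
    (hfreq : ∀ Q₀ : ℝ, ∃ Qr ≥ Q₀, Qr ^ (4:ℝ) * minForm ![x] Qr ≤ 16) :
    ((4:ℝ):EReal) ≤ oexp ![x] := by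
  apply le_sSup
  exact ⟨4, rfl, by norm_num, 16, Filter.frequently_atTop.2 hfreq⟩

lemma theta_coord (ξ : Fin 2 → ℝ) (hξ : ξ ∈ Theta 2) (i : Fin 2) :
    ((4:ℝ):EReal) ≤ oexp ![ξ i] := by
  obtain ⟨-, Q, hseq, j₀, h1, h2, h3⟩ := hξ
  apply oexp_ge_four_of
  intro Q₀
  obtain ⟨n₀, hn₀⟩ := exists_nat_ge (max Q₀ 5)
  set J : ℕ := j₀ + n₀ + 1 with hJ
  have hJj₀ : j₀ + 1 ≤ J := by omega
  have hXmono : StrictMono (fun k => ‖hat (Q k)‖) := strictMono_nat_of_lt_succ hseq.2.1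
  -- pick j ∈ {J, J+1} with Q j in the i-th lattice
  have hpick : ∃ j, J ≤ j ∧ Q j ∈ Hlat 2 (Fin.castSucc i) := by
    fin_cases i
    · by_cases hc : Q J ∈ Hlat 2 0
      · exact ⟨J, le_rfl, hc⟩
      · have hH1 : Q J ∈ Hlat 2 1 := by
          rcases h1 J (by omega) with h | h
          · exact absurd h hc
          · exact h
        have : Q (J+1) ∈ Hlat 2 0 := by
          rcases h1 (J+1) (by omega) with h | h
          · exact h
          · exact absurd ⟨hH1, h⟩ (h2 J (by omega)).2
        exact ⟨J+1, by omega, this⟩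
    · by_cases hc : Q J ∈ Hlat 2 1
      · exact ⟨J, le_rfl, hc⟩
      · have hH0 : Q J ∈ Hlat 2 0 := by
          rcases h1 J (by omega) with h | h
          · exact h
          · exact absurd h hc
        have : Q (J+1) ∈ Hlat 2 1 := by
          rcases h1 (J+1) (by omega) with h | h
          · exact absurd ⟨hH0, h⟩ (h2 J (by omega)).1
          · exact h
        exact ⟨J+1, by omega, this⟩
  obtain ⟨j, hJle, hmem⟩ := hpick
  set Qr : ℝ := ‖hat (Q j)‖ with hQr
  have hXJ : (J:ℝ) ≤ Qr := by
    calc (J:ℝ) ≤ ‖hat (Q J)‖ := Xgrow ξ Q hseq J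
      _ ≤ Qr := hXmono.monotone hJle
  have hn₀J : (n₀:ℝ) ≤ (J:ℝ) := by exact_mod_cast (by omega : n₀ ≤ J)
  have h5 : (5:ℝ) ≤ Qr := le_trans (le_trans (le_max_right Q₀ 5) hn₀) (le_trans hn₀J hXJ)
  have hQ₀ : Q₀ ≤ Qr := le_trans (le_trans (le_max_left Q₀ 5) hn₀) (le_trans hn₀J hXJ)
  -- j = k + 1 with k ≥ j₀
  obtain ⟨k, rfl⟩ : ∃ k, j = k + 1 := ⟨j - 1, by omega⟩
  have hkj₀ : j₀ ≤ k := by omega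
  have hkey := KEY ξ Q hseq j₀ h1 h2 h3 k hkj₀ h5
  -- minForm bound
  have hmf : minForm ![ξ i] Qr ≤ linForm ξ (Q (k+1)) := by
    fin_cases i
    · have hz : Q (k+1) 1 = 0 := hlat0_coord _ hmem
      have hb : Q (k+1) 0 ≠ 0 := by
        intro h0
        apply (hseq.1 (k+1)).1
        funext m
        fin_cases m
        · exact h0
        · exact hz
      have hle := minForm_le_abs (ξ 0) Qr ![Q (k+1) 0, Q (k+1) 2] (by simpa using hb)
        (by exact norm_le_pi_norm (hat (Q (k+1))) 0)
      have hres : linForm ξ (Q (k+1)) = |(Q (k+1) 0 : ℝ) * ξ 0 + (Q (k+1) 2 : ℝ)| := by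
        rw [linForm3, hz]; push_cast; ring_nf
      rw [hres]
      simpa using hle
    · have hz : Q (k+1) 0 = 0 := hlat1_coord _ hmem
      have hb : Q (k+1) 1 ≠ 0 := by
        intro h0
        apply (hseq.1 (k+1)).1
        funext m
        fin_cases m
        · exact hz
        · exact h0
      have hle := minForm_le_abs (ξ 1) Qr ![Q (k+1) 1, Q (k+1) 2] (by simpa using hb)
        (by exact norm_le_pi_norm (hat (Q (k+1))) 1)
      have hres : linForm ξ (Q (k+1)) = |(Q (k+1) 1 : ℝ) * ξ 1 + (Q (k+1) 2 : ℝ)| := by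
        rw [linForm3, hz]; push_cast; ring_nf
      rw [hres]
      simpa using hle
  refine ⟨Qr, hQ₀, ?_⟩
  have hr4 : Qr ^ (4:ℝ) = Qr ^ (4:ℕ) := by
    rw [show ((4:ℝ)) = ((4:ℕ):ℝ) by norm_num, Real.rpow_natCast]
  rw [hr4]
  calc Qr ^ (4:ℕ) * minForm ![ξ i] Qr ≤ Qr ^ (4:ℕ) * linForm ξ (Q (k+1)) := by
        apply mul_le_mul_of_nonneg_left hmf (by positivity)
    _ ≤ 16 := hkey

/-- every `ξ = (ξ₁,ξ₂) ∈ Θ²` satisfies `min{ω(ξ₁), ω(ξ₂)} ≥ 4`. -/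
theorem Theta_two_oexp (ξ : Fin 2 → ℝ) (hξ : ξ ∈ Theta 2) :
    ((4 : ℝ) : EReal) ≤ min (oexp ![ξ 0]) (oexp ![ξ 1]) := by
  exact le_min (theta_coord ξ hξ 0) (theta_coord ξ hξ 1)

end BestApprox
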